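/- arXiv:math/0511609 — 5 statements merged into one kernel-verified Lean document; each statement's English description precedes it below -/
import Mathlib

section
/- Let (𝓜, ⊗, 1) be a monoidal category and 𝓩 a small category. Let G : 𝓩 → 𝓜 be a functor equipped with natural transformations Δ : G ⟶ G⊗G and ε : G ⟶ const_1, where (G⊗G)(Z) = G(Z)⊗G(Z) on objects and (G⊗G)(f) = G(f)⊗G(f) on morphisms, and const_1 is the constant functor at the unit object, such that for every object Z the triple (G(Z), Δ_Z, ε_Z) is a comonoid object in 𝓜 (Δ_Z coassociative up to the associator, ε_Z a counit up to the unitors). If a colimit cocone (C, c) of G exists in 𝓜, then there exist unique morphisms Δ_C : C → C⊗C and ε_C : C → 1 such that c_Z ≫ Δ_C = Δ_Z ≫ (c_Z ⊗ c_Z) and c_Z ≫ ε_C = ε_Z for every object Z of 𝓩, and moreover (C, Δ_C, ε_C) is a comonoid object in 𝓜. -/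
open CategoryTheory CategoryTheory.Limits CategoryTheory.MonoidalCategory

/-- A `𝒵`-coalgebra in a monoidal category `𝓜` (a functor `G` equipped with
natural transformations `Δ : G ⟶ G ⊗ G` and `ε : G ⟶ const 𝟙_𝓜` which are objectwise a
comonoid structure) induces, on any colimit `C` of `G`, a unique pair of morphisms
`Δ_C, ε_C` compatible with the colimit cocone, and these make `C` a comonoid object. -/
theorem colimit_of_coalgebra_functor_is_comonoid
    {Z : Type*} [SmallCategory Z] {M : Type*} [Category M] [MonoidalCategory M]
    (G : Z ⥤ M)
    (Δ : ∀ z : Z, G.obj z ⟶ G.obj z ⊗ G.obj z)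
    (ε : ∀ z : Z, G.obj z ⟶ 𝟙_ M)
    (hΔnat : ∀ {z z' : Z} (f : z ⟶ z'), G.map f ≫ Δ z' = Δ z ≫ (G.map f ⊗ₘ G.map f))
    (hεnat : ∀ {z z' : Z} (f : z ⟶ z'), G.map f ≫ ε z' = ε z)
    (hcoassoc : ∀ z : Z,
      Δ z ≫ (Δ z ⊗ₘ 𝟙 (G.obj z)) ≫ (α_ (G.obj z) (G.obj z) (G.obj z)).hom
        = Δ z ≫ (𝟙 (G.obj z) ⊗ₘ Δ z))
    (hcounit_left : ∀ z : Z, Δ z ≫ (ε z ⊗ₘ 𝟙 (G.obj z)) = (λ_ (G.obj z)).inv)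
    (hcounit_right : ∀ z : Z, Δ z ≫ (𝟙 (G.obj z) ⊗ₘ ε z) = (ρ_ (G.obj z)).inv)
    (c : Cocone G) (hc : IsColimit c) :
    ∃ (ΔC : c.pt ⟶ c.pt ⊗ c.pt) (εC : c.pt ⟶ 𝟙_ M),
      (∀ z : Z, c.ι.app z ≫ ΔC = Δ z ≫ (c.ι.app z ⊗ₘ c.ι.app z)) ∧
      (∀ z : Z, c.ι.app z ≫ εC = ε z) ∧
      (∀ (ΔC' : c.pt ⟶ c.pt ⊗ c.pt) (εC' : c.pt ⟶ 𝟙_ M),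
        (∀ z : Z, c.ι.app z ≫ ΔC' = Δ z ≫ (c.ι.app z ⊗ₘ c.ι.app z)) →
        (∀ z : Z, c.ι.app z ≫ εC' = ε z) → ΔC' = ΔC ∧ εC' = εC) ∧
      (ΔC ≫ (ΔC ⊗ₘ 𝟙 c.pt) ≫ (α_ c.pt c.pt c.pt).hom = ΔC ≫ (𝟙 c.pt ⊗ₘ ΔC)) ∧
      (ΔC ≫ (εC ⊗ₘ 𝟙 c.pt) = (λ_ c.pt).inv) ∧
      (ΔC ≫ (𝟙 c.pt ⊗ₘ εC) = (ρ_ c.pt).inv) := by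
  obtain ⟨ι, hι⟩ : ∃ ι : ∀ z : Z, G.obj z ⟶ c.pt, ι = fun z => c.ι.app z := ⟨_, rfl⟩
  have hz : ∀ z : Z, c.ι.app z = ι z := fun z => (congrFun hι z).symm
  have wfac : ∀ {z z' : Z} (f : z ⟶ z'), G.map f ≫ ι z' = ι z := by
    intro z z' f; rw [← hz, ← hz]; exact c.w f
  let sΔ : Cocone G :=
    { pt := c.pt ⊗ c.pt
      ι :=
        { app := fun z => Δ z ≫ (ι z ⊗ₘ ι z)
          naturality := by
            intro z z' f
            simp only [Functor.const_obj_obj, Functor.const_obj_map, Category.comp_id,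
              ← Category.assoc, hΔnat f]
            rw [Category.assoc, tensorHom_comp_tensorHom, wfac f] } }
  let sε : Cocone G :=
    { pt := 𝟙_ M
      ι :=
        { app := fun z => ε z
          naturality := by
            intro z z' f
            simp [hεnat f] } }
  have fΔ : ∀ z : Z, ι z ≫ hc.desc sΔ = Δ z ≫ (ι z ⊗ₘ ι z) := by
    intro z; have h := hc.fac sΔ z; rw [hz] at h; exact h
  have fε : ∀ z : Z, ι z ≫ hc.desc sε = ε z := by
    intro z; have h := hc.fac sε z; rw [hz] at h; exact h
  refine ⟨hc.desc sΔ, hc.desc sε,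
    fun z => by rw [hz]; exact fΔ z,
    fun z => by rw [hz]; exact fε z, ?_, ?_, ?_, ?_⟩
  · intro ΔC' εC' h1 h2
    constructor
    · exact hc.hom_ext fun z => by
        have h := h1 z; rw [hz] at h ⊢; rw [h, ← fΔ z]
    · exact hc.hom_ext fun z => by
        have h := h2 z; rw [hz] at h ⊢; rw [h, ← fε z]
  · apply hc.hom_ext
    intro z
    rw [hz]
    calc ι z ≫ hc.desc sΔ ≫ (hc.desc sΔ ⊗ₘ 𝟙 c.pt) ≫ (α_ c.pt c.pt c.pt).hom
        = (Δ z ≫ (ι z ⊗ₘ ι z)) ≫ (hc.desc sΔ ⊗ₘ 𝟙 c.pt) ≫ (α_ c.pt c.pt c.pt).hom := by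
          rw [← Category.assoc, fΔ]
      _ = Δ z ≫ (((ι z ≫ hc.desc sΔ) ⊗ₘ (ι z ≫ 𝟙 c.pt)) ≫ (α_ c.pt c.pt c.pt).hom) := by
          rw [Category.assoc, ← Category.assoc (ι z ⊗ₘ ι z), tensorHom_comp_tensorHom]
      _ = Δ z ≫ ((Δ z ≫ (ι z ⊗ₘ ι z)) ⊗ₘ ι z) ≫ (α_ c.pt c.pt c.pt).hom := by
          rw [fΔ, Category.comp_id]
      _ = Δ z ≫ ((Δ z ⊗ₘ 𝟙 (G.obj z)) ≫ ((ι z ⊗ₘ ι z) ⊗ₘ ι z)) ≫ (α_ c.pt c.pt c.pt).hom := by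
          rw [tensorHom_comp_tensorHom, Category.id_comp]
      _ = Δ z ≫ (Δ z ⊗ₘ 𝟙 (G.obj z)) ≫ (α_ (G.obj z) (G.obj z) (G.obj z)).hom
            ≫ (ι z ⊗ₘ (ι z ⊗ₘ ι z)) := by
          simp only [Category.assoc]; rw [associator_naturality]
      _ = Δ z ≫ (𝟙 (G.obj z) ⊗ₘ Δ z) ≫ (ι z ⊗ₘ (ι z ⊗ₘ ι z)) := by
          rw [← Category.assoc, ← Category.assoc, ← Category.assoc, Category.assoc (Δ z),
            hcoassoc z, Category.assoc]
      _ = Δ z ≫ (ι z ⊗ₘ (Δ z ≫ (ι z ⊗ₘ ι z))) := by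
          rw [tensorHom_comp_tensorHom, Category.id_comp]
      _ = Δ z ≫ ((ι z ≫ 𝟙 c.pt) ⊗ₘ (ι z ≫ hc.desc sΔ)) := by
          rw [fΔ, Category.comp_id]
      _ = ι z ≫ hc.desc sΔ ≫ (𝟙 c.pt ⊗ₘ hc.desc sΔ) := by
          rw [← tensorHom_comp_tensorHom, ← Category.assoc, ← fΔ, Category.assoc]
  · apply hc.hom_ext
    intro z
    rw [hz]
    calc ι z ≫ hc.desc sΔ ≫ (hc.desc sε ⊗ₘ 𝟙 c.pt)
        = Δ z ≫ ((ι z ≫ hc.desc sε) ⊗ₘ (ι z ≫ 𝟙 c.pt)) := by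
          rw [← Category.assoc, fΔ, Category.assoc, tensorHom_comp_tensorHom]
      _ = Δ z ≫ (ε z ⊗ₘ 𝟙 (G.obj z)) ≫ (𝟙 (𝟙_ M) ⊗ₘ ι z) := by
          rw [fε, Category.comp_id, tensorHom_comp_tensorHom, Category.comp_id, Category.id_comp]
      _ = (λ_ (G.obj z)).inv ≫ (𝟙 (𝟙_ M) ⊗ₘ ι z) := by rw [← Category.assoc, hcounit_left z]
      _ = ι z ≫ (λ_ c.pt).inv := by rw [id_tensorHom, leftUnitor_inv_naturality]
  · apply hc.hom_ext
    intro z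
    rw [hz]
    calc ι z ≫ hc.desc sΔ ≫ (𝟙 c.pt ⊗ₘ hc.desc sε)
        = Δ z ≫ ((ι z ≫ 𝟙 c.pt) ⊗ₘ (ι z ≫ hc.desc sε)) := by
          rw [← Category.assoc, fΔ, Category.assoc, tensorHom_comp_tensorHom]
      _ = Δ z ≫ (𝟙 (G.obj z) ⊗ₘ ε z) ≫ (ι z ⊗ₘ 𝟙 (𝟙_ M)) := by
          rw [fε, Category.comp_id, tensorHom_comp_tensorHom, Category.comp_id, Category.id_comp]
      _ = (ρ_ (G.obj z)).inv ≫ (ι z ⊗ₘ 𝟙 (𝟙_ M)) := by rw [← Category.assoc, hcounit_right z]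
      _ = ι z ≫ (ρ_ c.pt).inv := by rw [tensorHom_id, rightUnitor_inv_naturality]
end

section
/- Let (𝓜, ⊗, 1) be a monoidal category, 𝓩 a small category, and G : 𝓩 → 𝓜 a functor with natural transformations Δ : G ⟶ G⊗G and ε : G ⟶ const_1 making each (G(Z), Δ_Z, ε_Z) a comonoid object. Suppose the colimit cocone (C, c) of G exists, and let (C, Δ_C, ε_C) be the induced comonoid with c_Z ≫ Δ_C = Δ_Z ≫ (c_Z ⊗ c_Z) and c_Z ≫ ε_C = ε_Z. Let H : 𝓩 → 𝓜 be a functor with a natural transformation ρ : H ⟶ H⊗G such that for each Z, ρ_Z is a coassociative counital right coaction of the comonoid G(Z) on H(Z). If the colimit cocone (M, m) of H exists, then there exists a unique morphism ρ_M : M → M⊗C with m_Z ≫ ρ_M = ρ_Z ≫ (m_Z ⊗ c_Z) for all Z, and ρ_M makes M a right C-comodule, i.e. ρ_M ≫ (ρ_M ⊗ id_C) ≫ α = ρ_M ≫ (id_M ⊗ Δ_C) and ρ_M ≫ (id_M ⊗ ε_C) equals the right unit constraint of M. -/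
open CategoryTheory CategoryTheory.Limits CategoryTheory.MonoidalCategory

/-- Let `G : 𝒵 ⥤ 𝓜` be a `𝒵`-coalgebra in a monoidal category with colimit
comonoid `(C, Δ_C, ε_C)`, and `H : 𝒵 ⥤ 𝓜` a functor equipped with a natural transformation
`ρ : H ⟶ H ⊗ G` which is objectwise a coassociative counital right coaction. If the colimit
cocone `(M, m)` of `H` exists, then there is a unique morphism `ρ_M : M ⟶ M ⊗ C` with
`m_Z ≫ ρ_M = ρ_Z ≫ (m_Z ⊗ c_Z)` for all `Z`, and `ρ_M` makes `M` a right `C`-comodule. -/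
theorem colimit_of_comodule_functor_is_comodule
    {Z : Type*} [SmallCategory Z] {M : Type*} [Category M] [MonoidalCategory M]
    (G : Z ⥤ M)
    (Δ : ∀ z : Z, G.obj z ⟶ G.obj z ⊗ G.obj z)
    (ε : ∀ z : Z, G.obj z ⟶ 𝟙_ M)
    (hΔnat : ∀ {z z' : Z} (f : z ⟶ z'), G.map f ≫ Δ z' = Δ z ≫ (G.map f ⊗ₘ G.map f))
    (hεnat : ∀ {z z' : Z} (f : z ⟶ z'), G.map f ≫ ε z' = ε z)
    (hcoassoc : ∀ z : Z,
      Δ z ≫ (Δ z ⊗ₘ 𝟙 (G.obj z)) ≫ (α_ (G.obj z) (G.obj z) (G.obj z)).hom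
        = Δ z ≫ (𝟙 (G.obj z) ⊗ₘ Δ z))
    (hcounit_left : ∀ z : Z, Δ z ≫ (ε z ⊗ₘ 𝟙 (G.obj z)) = (λ_ (G.obj z)).inv)
    (hcounit_right : ∀ z : Z, Δ z ≫ (𝟙 (G.obj z) ⊗ₘ ε z) = (ρ_ (G.obj z)).inv)
    (c : Cocone G) (hc : IsColimit c)
    (ΔC : c.pt ⟶ c.pt ⊗ c.pt) (εC : c.pt ⟶ 𝟙_ M)
    (hΔC : ∀ z : Z, c.ι.app z ≫ ΔC = Δ z ≫ (c.ι.app z ⊗ₘ c.ι.app z))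
    (hεC : ∀ z : Z, c.ι.app z ≫ εC = ε z)
    (H : Z ⥤ M)
    (ρc : ∀ z : Z, H.obj z ⟶ H.obj z ⊗ G.obj z)
    (hρnat : ∀ {z z' : Z} (f : z ⟶ z'), H.map f ≫ ρc z' = ρc z ≫ (H.map f ⊗ₘ G.map f))
    (hρcoassoc : ∀ z : Z,
      ρc z ≫ (ρc z ⊗ₘ 𝟙 (G.obj z)) ≫ (α_ (H.obj z) (G.obj z) (G.obj z)).hom
        = ρc z ≫ (𝟙 (H.obj z) ⊗ₘ Δ z))
    (hρcounit : ∀ z : Z, ρc z ≫ (𝟙 (H.obj z) ⊗ₘ ε z) = (ρ_ (H.obj z)).inv)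
    (m : Cocone H) (hm : IsColimit m) :
    ∃ ρM : m.pt ⟶ m.pt ⊗ c.pt,
      (∀ z : Z, m.ι.app z ≫ ρM = ρc z ≫ (m.ι.app z ⊗ₘ c.ι.app z)) ∧
      (∀ ρM' : m.pt ⟶ m.pt ⊗ c.pt,
        (∀ z : Z, m.ι.app z ≫ ρM' = ρc z ≫ (m.ι.app z ⊗ₘ c.ι.app z)) → ρM' = ρM) ∧
      (ρM ≫ (ρM ⊗ₘ 𝟙 c.pt) ≫ (α_ m.pt c.pt c.pt).hom = ρM ≫ (𝟙 m.pt ⊗ₘ ΔC)) ∧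
      (ρM ≫ (𝟙 m.pt ⊗ₘ εC) = (ρ_ m.pt).inv) := by
  let cone : Cocone H :=
    { pt := m.pt ⊗ c.pt
      ι := { app := fun z => ρc z ≫ (m.ι.app z ⊗ₘ c.ι.app z)
             naturality := by
               intro z z' f
               simp only [Functor.const_obj_obj, Functor.const_obj_map, Category.comp_id]
               rw [← Category.assoc, hρnat f, Category.assoc, tensorHom_comp_tensorHom,
                 m.w f, c.w f] } }
  refine ⟨hm.desc cone, fun z => hm.fac cone z, ?_, ?_, ?_⟩
  · intro ρM' h
    exact hm.hom_ext fun z => by rw [hm.fac cone z, h z]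
  · apply hm.hom_ext
    intro z
    have fac : ∀ z, m.ι.app z ≫ hm.desc cone = ρc z ≫ (m.ι.app z ⊗ₘ c.ι.app z) :=
      fun z => hm.fac cone z
    calc m.ι.app z ≫ hm.desc cone ≫ ((hm.desc cone) ⊗ₘ 𝟙 c.pt) ≫ (α_ m.pt c.pt c.pt).hom
        = (ρc z ≫ (m.ι.app z ⊗ₘ c.ι.app z)) ≫ ((hm.desc cone) ⊗ₘ 𝟙 c.pt)
            ≫ (α_ m.pt c.pt c.pt).hom := by rw [← Category.assoc, fac z]
      _ = ρc z ≫ ((m.ι.app z ≫ hm.desc cone) ⊗ₘ c.ι.app z) ≫ (α_ m.pt c.pt c.pt).hom := by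
            rw [Category.assoc, ← Category.assoc (m.ι.app z ⊗ₘ c.ι.app z), tensorHom_comp_tensorHom]
            simp only [Functor.const_obj_obj, Category.comp_id]
      _ = ρc z ≫ ((ρc z ≫ (m.ι.app z ⊗ₘ c.ι.app z)) ⊗ₘ c.ι.app z)
            ≫ (α_ m.pt c.pt c.pt).hom := by
            rw [fac z]
      _ = ρc z ≫ (ρc z ⊗ₘ 𝟙 (G.obj z)) ≫ ((m.ι.app z ⊗ₘ c.ι.app z) ⊗ₘ c.ι.app z)
            ≫ (α_ m.pt c.pt c.pt).hom := by
            rw [← Category.assoc (ρc z ⊗ₘ 𝟙 (G.obj z)), tensorHom_comp_tensorHom]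
            simp only [Functor.const_obj_obj, Category.id_comp, Category.comp_id]
      _ = ρc z ≫ ((ρc z ⊗ₘ 𝟙 (G.obj z)) ≫ (α_ (H.obj z) (G.obj z) (G.obj z)).hom)
            ≫ (m.ι.app z ⊗ₘ (c.ι.app z ⊗ₘ c.ι.app z)) := by
            simp only [Functor.const_obj_obj]
            rw [Category.assoc, associator_naturality]
      _ = ρc z ≫ (𝟙 (H.obj z) ⊗ₘ Δ z) ≫ (m.ι.app z ⊗ₘ (c.ι.app z ⊗ₘ c.ι.app z)) := by
            rw [← Category.assoc, ← Category.assoc, Category.assoc (ρc z), hρcoassoc z,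
              Category.assoc]
      _ = ρc z ≫ (m.ι.app z ⊗ₘ (Δ z ≫ (c.ι.app z ⊗ₘ c.ι.app z))) := by
            rw [tensorHom_comp_tensorHom, Category.id_comp]
      _ = ρc z ≫ (m.ι.app z ⊗ₘ (c.ι.app z ≫ ΔC)) := by rw [← hΔC z]
      _ = ρc z ≫ (m.ι.app z ⊗ₘ c.ι.app z) ≫ (𝟙 m.pt ⊗ₘ ΔC) := by
            rw [tensorHom_comp_tensorHom]
            simp only [Functor.const_obj_obj, Category.comp_id]
      _ = m.ι.app z ≫ hm.desc cone ≫ (𝟙 m.pt ⊗ₘ ΔC) := by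
            rw [← Category.assoc, ← fac z, Category.assoc]
  · apply hm.hom_ext
    intro z
    rw [← Category.assoc, hm.fac cone z]
    rw [Category.assoc, tensorHom_comp_tensorHom, Category.comp_id, hεC z, rightUnitor_inv_naturality,
      ← hρcounit z, Category.assoc, id_tensorHom, ← tensorHom_def']
end

section
/- Let (I, ≤) be a directed partially ordered set, 𝓐 a category, and (M_i, μ_{ji}, ν_{ij}) a split direct system in 𝓐 over I. Suppose the colimit cocone (M, μ) of the underlying direct system (M_i, μ_{ji}) exists, so μ_i : M_i → M satisfy μ_i = μ_{ji} ≫ μ_j for i ≤ j. Then there exist unique morphisms ν_i : M → M_i (i ∈ I) in 𝓐 such that ν_i ∘ μ_i = id_{M_i} and ν_i = ν_{ij} ∘ ν_j for all i ≤ j in I. -/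
open CategoryTheory

/-- If `(M_i, μ_{ji}, ν_{ij})` is a split direct system in a category `𝓐`
over a directed poset `I` and the colimit cocone `(M, μ)` of the underlying direct system
exists, then there exist unique morphisms `ν_i : M ⟶ M_i` with `ν_i ∘ μ_i = id` and
`ν_i = ν_{ij} ∘ ν_j` for all `i ≤ j`. -/
theorem split_direct_system_colimit_retractions
    {I : Type*} [PartialOrder I] (hdir : ∀ i j : I, ∃ k, i ≤ k ∧ j ≤ k)
    {A : Type*} [Category A]
    (M : I → A)
    (μ : ∀ i j : I, i ≤ j → (M i ⟶ M j))
    (ν : ∀ i j : I, i ≤ j → (M j ⟶ M i))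
    (hsplit : ∀ (i j : I) (h : i ≤ j), μ i j h ≫ ν i j h = 𝟙 (M i))
    (hμrefl : ∀ i : I, μ i i le_rfl = 𝟙 (M i))
    (hνrefl : ∀ i : I, ν i i le_rfl = 𝟙 (M i))
    (hμtrans : ∀ (i j k : I) (hij : i ≤ j) (hjk : j ≤ k),
      μ i j hij ≫ μ j k hjk = μ i k (hij.trans hjk))
    (hνtrans : ∀ (i j k : I) (hij : i ≤ j) (hjk : j ≤ k),
      ν j k hjk ≫ ν i j hij = ν i k (hij.trans hjk))
    -- the colimit cocone (M∞, ι)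
    (Mc : A) (ι : ∀ i : I, M i ⟶ Mc)
    (hcocone : ∀ (i j : I) (h : i ≤ j), μ i j h ≫ ι j = ι i)
    (huniv : ∀ (X : A) (f : ∀ i : I, M i ⟶ X),
      (∀ (i j : I) (h : i ≤ j), μ i j h ≫ f j = f i) →
      ∃! g : Mc ⟶ X, ∀ i : I, ι i ≫ g = f i) :
    ∃! νc : ∀ i : I, Mc ⟶ M i,
      (∀ i : I, ι i ≫ νc i = 𝟙 (M i)) ∧
      (∀ (i j : I) (h : i ≤ j), νc i = νc j ≫ ν i j h) := by
  classical
  -- Step 1: the "transfer" maps f i j : M j ⟶ M i (via any common upper bound)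
  have step : ∀ (i m l : I) (him : i ≤ m) (hml : m ≤ l),
      ν i m him = μ m l hml ≫ ν i l (him.trans hml) := by
    intro i m l him hml
    rw [← hνtrans i m l him hml, ← Category.assoc, hsplit, Category.id_comp]
  have key : ∀ (i j k k' : I) (hik : i ≤ k) (hjk : j ≤ k) (hik' : i ≤ k') (hjk' : j ≤ k'),
      μ j k hjk ≫ ν i k hik = μ j k' hjk' ≫ ν i k' hik' := by
    intro i j k k' hik hjk hik' hjk'
    obtain ⟨l, hkl, hk'l⟩ := hdir k k'
    rw [step i k l hik hkl, step i k' l hik' hk'l, ← Category.assoc, ← Category.assoc,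
      hμtrans, hμtrans]
  set k : I → I → I := fun i j => (hdir i j).choose with hkdef
  have hk1 : ∀ i j, i ≤ k i j := fun i j => (hdir i j).choose_spec.1
  have hk2 : ∀ i j, j ≤ k i j := fun i j => (hdir i j).choose_spec.2
  set f : ∀ i j : I, M j ⟶ M i :=
    fun i j => μ j (k i j) (hk2 i j) ≫ ν i (k i j) (hk1 i j) with hfdef
  have hf : ∀ (i j m : I) (him : i ≤ m) (hjm : j ≤ m),
      f i j = μ j m hjm ≫ ν i m him := by
    intro i j m him hjm
    exact key i j (k i j) m (hk1 i j) (hk2 i j) him hjm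
  have hcoc : ∀ (i j j' : I) (h : j ≤ j'), μ j j' h ≫ f i j' = f i j := by
    intro i j j' h
    obtain ⟨m, him, hj'm⟩ := hdir i j'
    rw [hf i j' m him hj'm, ← Category.assoc, hμtrans, ← hf i j m him (h.trans hj'm)]
  -- Step 2: define νc i via the universal property
  set νc : ∀ i : I, Mc ⟶ M i :=
    fun i => (huniv (M i) (f i) (fun j j' h => hcoc i j j' h)).choose with hνcdef
  have hνc : ∀ i j : I, ι j ≫ νc i = f i j :=
    fun i => (huniv (M i) (f i) (fun j j' h => hcoc i j j' h)).choose_spec.1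
  have hνcu : ∀ (i : I) (g : Mc ⟶ M i), (∀ j, ι j ≫ g = f i j) → g = νc i :=
    fun i => (huniv (M i) (f i) (fun j j' h => hcoc i j j' h)).choose_spec.2
  refine ⟨νc, ⟨?_, ?_⟩, ?_⟩
  · intro i
    rw [hνc i i, hf i i (k i i) (hk1 i i) (hk1 i i), hsplit]
  · intro i j h
    refine (hνcu i (νc j ≫ ν i j h) ?_).symm
    intro l
    obtain ⟨m, hjm, hlm⟩ := hdir j l
    rw [← Category.assoc, hνc j l, hf j l m hjm hlm, Category.assoc,
      hνtrans i j m h hjm, ← hf i l m (h.trans hjm) hlm]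
  · intro νc' ⟨h1, h2⟩
    funext i
    refine hνcu i (νc' i) ?_
    intro l
    obtain ⟨m, him, hlm⟩ := hdir i l
    rw [h2 i m him, ← hcocone l m hlm, Category.assoc, ← Category.assoc (ι m), h1 m,
      Category.id_comp, ← hf i l m him hlm]
end

section
/- Let A be a unital ring, (I, ≤) a directed partially ordered set, P a right A-module, and for each i ∈ I let P_i be a right A-module with right A-linear maps σ_i : P_i → P and τ_i : P → P_i such that τ_i ∘ σ_i = id_{P_i}; for i ≤ j let σ_{ji} : P_i → P_j and τ_{ij} : P_j → P_i be right A-linear with τ_{ij} ∘ σ_{ji} = id_{P_i}, σ_i = σ_j ∘ σ_{ji} and τ_i = τ_{ij} ∘ τ_j. Define P† = { φ ∈ Hom_A(P, A) : ∃ i ∈ I, φ = φ ∘ σ_i ∘ τ_i }, a left A-submodule of Hom_A(P, A), and for each i define τ_i* : Hom_A(P_i, A) → P†, τ_i*(φ_i) = φ_i ∘ τ_i. Then (P†, τ*) is a colimit cocone of the direct system (Hom_A(P_i, A), τ_{ij}*) of left A-modules, where τ_{ij}*(φ_i) = φ_i ∘ τ_{ij}: that is, τ_j* ∘ τ_{ij}*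 = τ_i* for all i ≤ j, and for every family of maps m_i : Hom_A(P_i, A) → M into an abelian group M with m_j ∘ τ_{ij}* = m_i for all i ≤ j, there exists a unique map f : P† → M with f ∘ τ_i* = m_i for all i ∈ I. -/
/-- With `P` a right `A`-module split over a direct system of right
`A`-modules `P_i` (over a nonempty directed poset `I`), the set
`P† = {φ ∈ Hom_A(P, A) : ∃ i, φ = φ ∘ σ_i ∘ τ_i}` is a left `A`-submodule of
`Hom_A(P, A)`, and `(P†, τ*)`, with `τ_i*(φ_i) = φ_i ∘ τ_i`, is a colimit cocone of the
direct system `(Hom_A(P_i, A), τ_{ij}*)`. -/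
theorem dual_colimit_is_Pdagger
    {A : Type*} [Ring A] {I : Type*} [PartialOrder I] [Nonempty I]
    (hdir : ∀ i j : I, ∃ k : I, i ≤ k ∧ j ≤ k)
    (P : Type*) [AddCommGroup P] [Module Aᵐᵒᵖ P]
    (Pi : I → Type*) [∀ i, AddCommGroup (Pi i)] [∀ i, Module Aᵐᵒᵖ (Pi i)]
    (σc : ∀ i : I, Pi i →ₗ[Aᵐᵒᵖ] P) (τc : ∀ i : I, P →ₗ[Aᵐᵒᵖ] Pi i)
    (hsplitc : ∀ (i : I) (p : Pi i), τc i (σc i p) = p)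
    (σ : ∀ i j : I, i ≤ j → (Pi i →ₗ[Aᵐᵒᵖ] Pi j))
    (τ : ∀ i j : I, i ≤ j → (Pi j →ₗ[Aᵐᵒᵖ] Pi i))
    (hsplit : ∀ (i j : I) (h : i ≤ j) (p : Pi i), τ i j h (σ i j h p) = p)
    (hσc : ∀ (i j : I) (h : i ≤ j) (p : Pi i), σc j (σ i j h p) = σc i p)
    (hτc : ∀ (i j : I) (h : i ≤ j) (p : P), τ i j h (τc j p) = τc i p) :
    let Pdag : Set (P →ₗ[Aᵐᵒᵖ] A) :=
      {φ : P →ₗ[Aᵐᵒᵖ] A | ∃ i : I, φ = (φ.comp (σc i)).comp (τc i)}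
    -- P† is a left A-submodule of Hom_A(P, A)
    ((0 : P →ₗ[Aᵐᵒᵖ] A) ∈ Pdag) ∧
    (∀ φ ∈ Pdag, ∀ ψ ∈ Pdag, φ + ψ ∈ Pdag) ∧
    (∀ (a : A), ∀ φ ∈ Pdag, a • φ ∈ Pdag) ∧
    -- τ_i* lands in P†
    (∀ (i : I) (φi : Pi i →ₗ[Aᵐᵒᵖ] A), φi.comp (τc i) ∈ Pdag) ∧
    -- cocone condition: τ_j* ∘ τ_{ij}* = τ_i*
    (∀ (i j : I) (h : i ≤ j) (φi : Pi i →ₗ[Aᵐᵒᵖ] A),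
      (φi.comp (τ i j h)).comp (τc j) = φi.comp (τc i)) ∧
    -- universal property
    (∀ (M : Type*) [AddCommGroup M] (m : ∀ i : I, (Pi i →ₗ[Aᵐᵒᵖ] A) → M),
      (∀ (i j : I) (h : i ≤ j) (φi : Pi i →ₗ[Aᵐᵒᵖ] A),
        m j (φi.comp (τ i j h)) = m i φi) →
      ∃! f : Pdag → M,
        ∀ (i : I) (φi : Pi i →ₗ[Aᵐᵒᵖ] A) (hmem : φi.comp (τc i) ∈ Pdag),
          f ⟨φi.comp (τc i), hmem⟩ = m i φi) := by

  intro Pdag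
  -- apply a membership witness pointwise
  have happ : ∀ (φ : P →ₗ[Aᵐᵒᵖ] A) (i : I), φ = (φ.comp (σc i)).comp (τc i) →
      ∀ q, φ q = φ (σc i (τc i q)) := by
    intro φ i hφ q
    conv_lhs => rw [hφ]
    rfl
  -- τ_{jk} x = τc j (σc k x)
  have hτσ : ∀ (j k : I) (h : j ≤ k) (x : Pi k), τ j k h x = τc j (σc k x) := by
    intro j k h x
    conv_lhs => rw [← hsplitc k x]
    rw [hτc]
  -- membership witnesses are upward closed
  have key : ∀ (φ : P →ₗ[Aᵐᵒᵖ] A) (i k : I), i ≤ k →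
      φ = (φ.comp (σc i)).comp (τc i) → φ = (φ.comp (σc k)).comp (τc k) := by
    intro φ i k hik hφ
    ext p
    have h1 : τc i (σc k (τc k p)) = τc i p := by
      rw [← hτc i k hik (σc k (τc k p)), hsplitc, hτc]
    simp only [LinearMap.comp_apply]
    rw [happ φ i hφ (σc k (τc k p)), h1, ← happ φ i hφ p]
  -- τ_i* lands in Pdag (used twice)
  have hland : ∀ (i : I) (φi : Pi i →ₗ[Aᵐᵒᵖ] A), φi.comp (τc i) ∈ Pdag := by
    intro i φi
    refine ⟨i, ?_⟩
    ext p
    simp [hsplitc]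
  refine ⟨⟨Classical.arbitrary I, by ext p; simp⟩, ?_, ?_, hland, ?_, ?_⟩
  · rintro φ ⟨i, hi⟩ ψ ⟨j, hj⟩
    obtain ⟨k, hik, hjk⟩ := hdir i j
    refine ⟨k, ?_⟩
    have hφ := key φ i k hik hi
    have hψ := key ψ j k hjk hj
    ext p
    simp only [LinearMap.comp_apply, LinearMap.add_apply]
    rw [← happ φ k hφ p, ← happ ψ k hψ p]
  · rintro a φ ⟨i, hi⟩
    refine ⟨i, ?_⟩
    ext p
    simp only [LinearMap.comp_apply, LinearMap.smul_apply]
    rw [← happ φ i hi p]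
  · intro i j h φi
    ext p
    simp only [LinearMap.comp_apply]
    rw [hτc]
  · intro M _ m hm
    -- if φ has witness j and j ≤ k, then m j (φ ∘ σc j) = m k (φ ∘ σc k)
    have step : ∀ (φ : P →ₗ[Aᵐᵒᵖ] A) (j k : I) (h : j ≤ k),
        φ = (φ.comp (σc j)).comp (τc j) →
        m j (φ.comp (σc j)) = m k (φ.comp (σc k)) := by
      intro φ j k h hφ
      rw [← hm j k h (φ.comp (σc j))]
      congr 1
      ext x
      simp only [LinearMap.comp_apply]
      rw [hτσ j k h x, ← happ φ j hφ (σc k x)]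
    -- value is independent of the witness
    have val_eq : ∀ (φ : P →ₗ[Aᵐᵒᵖ] A) (i j : I),
        φ = (φ.comp (σc i)).comp (τc i) → φ = (φ.comp (σc j)).comp (τc j) →
        m i (φ.comp (σc i)) = m j (φ.comp (σc j)) := by
      intro φ i j hi hj
      obtain ⟨k, hik, hjk⟩ := hdir i j
      rw [step φ i k hik hi, step φ j k hjk hj]
    refine ⟨fun x => m x.2.choose (x.1.comp (σc x.2.choose)), ?_, ?_⟩
    · intro i φi hmem
      show m hmem.choose ((φi.comp (τc i)).comp (σc hmem.choose)) = m i φi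
      have hwi : φi.comp (τc i) = ((φi.comp (τc i)).comp (σc i)).comp (τc i) := by
        ext p; simp [hsplitc]
      rw [val_eq (φi.comp (τc i)) hmem.choose i hmem.choose_spec hwi]
      congr 1
      ext x
      simp [hsplitc]
    · intro g hg
      funext x
      obtain ⟨φ, hmem⟩ := x
      have hi := hmem.choose_spec
      have hxeq : (⟨φ, hmem⟩ : Pdag) =
          ⟨(φ.comp (σc hmem.choose)).comp (τc hmem.choose), hland hmem.choose _⟩ :=
        Subtype.ext hi
      have hgval : g ⟨φ, hmem⟩ = m hmem.choose (φ.comp (σc hmem.choose)) :=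
        (congrArg g hxeq).trans
          (hg hmem.choose (φ.comp (σc hmem.choose)) (hland hmem.choose _))
      rw [hgval]
end

section
/- Let 𝓐 be a preadditive category, (I, ≤) a directed partially ordered set, (M_i, μ_{ji}, ν_{ij}) a split direct system in 𝓐, and M an object with morphisms μ_i : M_i → M and ν_i : M → M_i satisfying ν_i ∘ μ_i = id_{M_i}, μ_i = μ_j ∘ μ_{ji} and ν_i = ν_{ij} ∘ ν_j for i ≤ j. Set e_i = μ_i ∘ ν_i, T = End_𝓐(M), T_i = End_𝓐(M_i), and T† = { t ∈ T : ∃ i, t = e_i ∘ t ∘ e_i }. For i ≤ j define ρ_{ji} : T_i → T_j by ρ_{ji}(t_i) = μ_{ji} ∘ t_i ∘ ν_{ij}, and for each i define ρ_i : T_i → T by ρ_i(t_i) = μ_i ∘ t_i ∘ ν_i. Then: (1) each ρ_{ji} and each ρ_i is additive and multiplicative, and ρ_i(t_i) ∈ T† for all t_i ∈ T_i; (2) ρ_j ∘ ρ_{ji} = ρ_i for all i ≤ j; (3) (T†, ρ) is a colimit of the direct system (T_i, ρ_{ji}): for every family of maps m_i : T_i → X into a set X with m_j ∘ ρ_{ji}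 = m_i for all i ≤ j, there exists a unique map f : T† → X with f ∘ ρ_i = m_i for all i ∈ I. -/
open CategoryTheory

/-- In a preadditive category, given a split direct system
`(M_i, μ_{ji}, ν_{ij})` over a directed poset with object `M`, morphisms `μ_i, ν_i`,
idempotents `e_i = μ_i ∘ ν_i`, endomorphism rings `T_i = End(M_i)`, `T = End(M)`,
`T† = {t : ∃ i, t = e_i ∘ t ∘ e_i}`, and maps `ρ_{ji}(t_i) = μ_{ji} ∘ t_i ∘ ν_{ij}`,
`ρ_i(t_i) = μ_i ∘ t_i ∘ ν_i`: (1) each `ρ_{ji}` and `ρ_i` is additive and multiplicative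
and `ρ_i` lands in `T†`; (2) `ρ_j ∘ ρ_{ji} = ρ_i`; (3) `(T†, ρ)` is a colimit of the
direct system `(T_i, ρ_{ji})`. -/
theorem Tdagger_is_colimit_of_endomorphism_rings
    {I : Type*} [PartialOrder I] (hdir : ∀ i j : I, ∃ k : I, i ≤ k ∧ j ≤ k)
    {A : Type*} [Category A] [Preadditive A]
    (M : I → A)
    (μ : ∀ i j : I, i ≤ j → (M i ⟶ M j))
    (ν : ∀ i j : I, i ≤ j → (M j ⟶ M i))
    (hsplit : ∀ (i j : I) (h : i ≤ j), μ i j h ≫ ν i j h = 𝟙 (M i))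
    (hμrefl : ∀ i : I, μ i i le_rfl = 𝟙 (M i))
    (hνrefl : ∀ i : I, ν i i le_rfl = 𝟙 (M i))
    (hμtrans : ∀ (i j k : I) (hij : i ≤ j) (hjk : j ≤ k),
      μ i j hij ≫ μ j k hjk = μ i k (hij.trans hjk))
    (hνtrans : ∀ (i j k : I) (hij : i ≤ j) (hjk : j ≤ k),
      ν j k hjk ≫ ν i j hij = ν i k (hij.trans hjk))
    (Mc : A) (ι : ∀ i : I, M i ⟶ Mc) (π : ∀ i : I, Mc ⟶ M i)
    (hsplitc : ∀ i : I, ι i ≫ π i = 𝟙 (M i))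
    (hι : ∀ (i j : I) (h : i ≤ j), μ i j h ≫ ι j = ι i)
    (hπ : ∀ (i j : I) (h : i ≤ j), π j ≫ ν i j h = π i) :
    let e : I → (Mc ⟶ Mc) := fun i => π i ≫ ι i
    let Tdag : Set (Mc ⟶ Mc) := {t : Mc ⟶ Mc | ∃ i : I, t = e i ≫ t ≫ e i}
    let ρs : ∀ i j : I, i ≤ j → (M i ⟶ M i) → (M j ⟶ M j) :=
      fun i j h t => ν i j h ≫ t ≫ μ i j h
    let ρc : ∀ i : I, (M i ⟶ M i) → (Mc ⟶ Mc) := fun i t => π i ≫ t ≫ ι i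
    -- (1) ρ_{ji} and ρ_i additive and multiplicative, ρ_i lands in T†
    (∀ (i j : I) (h : i ≤ j) (s t : M i ⟶ M i),
      ρs i j h (s + t) = ρs i j h s + ρs i j h t) ∧
    (∀ (i j : I) (h : i ≤ j) (s t : M i ⟶ M i),
      ρs i j h (s ≫ t) = ρs i j h s ≫ ρs i j h t) ∧
    (∀ (i : I) (s t : M i ⟶ M i), ρc i (s + t) = ρc i s + ρc i t) ∧
    (∀ (i : I) (s t : M i ⟶ M i), ρc i (s ≫ t) = ρc i s ≫ ρc i t) ∧
    (∀ (i : I) (t : M i ⟶ M i), ρc i t ∈ Tdag) ∧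
    -- (2) ρ_j ∘ ρ_{ji} = ρ_i
    (∀ (i j : I) (h : i ≤ j) (t : M i ⟶ M i), ρc j (ρs i j h t) = ρc i t) ∧
    -- (3) universal property of the colimit
    (∀ (X : Type*) (m : ∀ i : I, (M i ⟶ M i) → X),
      (∀ (i j : I) (h : i ≤ j) (t : M i ⟶ M i), m j (ρs i j h t) = m i t) →
      ∃! f : Tdag → X,
        ∀ (i : I) (t : M i ⟶ M i) (hmem : ρc i t ∈ Tdag), f ⟨ρc i t, hmem⟩ = m i t) := by
  intro e Tdag ρs ρc
  have heρ : ∀ (i : I) (t : M i ⟶ M i), e i ≫ (ρc i t) ≫ e i = ρc i t := by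
    intro i t
    simp only [e, ρc, Category.assoc]
    rw [reassoc_of% hsplitc i, reassoc_of% hsplitc i]
  have hρρ : ∀ (i j : I) (h : i ≤ j) (t : M i ⟶ M i), ρc j (ρs i j h t) = ρc i t := by
    intro i j h t
    simp only [ρc, ρs, ← Category.assoc]
    rw [hπ i j h, Category.assoc, Category.assoc, hι i j h, Category.assoc]
  refine ⟨?_, ?_, ?_, ?_, ?_, hρρ, ?_⟩
  · intro i j h s t; simp [ρs, Preadditive.add_comp, Preadditive.comp_add]
  · intro i j h s t
    simp only [ρs, Category.assoc]
    rw [reassoc_of% hsplit i j h]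
  · intro i s t; simp [ρc, Preadditive.add_comp, Preadditive.comp_add]
  · intro i s t
    simp only [ρc, Category.assoc]
    rw [reassoc_of% hsplitc i]
  · intro i t; exact ⟨i, (heρ i t).symm⟩
  · intro X m hm
    -- key: for t with witness i, the value m k (ι k ≫ t ≫ π k) for i ≤ k matches
    have key : ∀ (t : Mc ⟶ Mc) (i k : I) (h : i ≤ k), t = e i ≫ t ≫ e i →
        m i (ι i ≫ t ≫ π i) = m k (ι k ≫ t ≫ π k) := by
      intro t i k h ht
      rw [← hm i k h]
      congr 1
      have h1 : ι k ≫ π i = ν i k h := by rw [← hπ i k h, ← Category.assoc, hsplitc k,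
        Category.id_comp]
      have h2 : ι i ≫ π k = μ i k h := by rw [← hι i k h, Category.assoc, hsplitc k,
        Category.comp_id]
      calc ρs i k h (ι i ≫ t ≫ π i)
          = (ι k ≫ π i) ≫ (ι i ≫ t ≫ π i) ≫ (ι i ≫ π k) := by
            simp only [ρs, h1, h2]
        _ = ι k ≫ (e i ≫ t ≫ e i) ≫ π k := by simp only [e, Category.assoc]
        _ = ι k ≫ t ≫ π k := by rw [← ht]
    -- recovery: t = ρc i (ι i ≫ t ≫ π i) when t = e i ≫ t ≫ e i
    have hrec : ∀ (t : Mc ⟶ Mc) (i : I), t = e i ≫ t ≫ e i → ρc i (ι i ≫ t ≫ π i) = t := by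
      intro t i ht
      simp only [ρc, e] at *
      conv_rhs => rw [ht]
      simp only [Category.assoc]
    -- value is independent of the witness
    have indep : ∀ (t : Mc ⟶ Mc) (i j : I), t = e i ≫ t ≫ e i → t = e j ≫ t ≫ e j →
        m i (ι i ≫ t ≫ π i) = m j (ι j ≫ t ≫ π j) := by
      intro t i j hi hj
      obtain ⟨k, hik, hjk⟩ := hdir i j
      rw [key t i k hik hi, key t j k hjk hj]
    refine ⟨fun t => m t.2.choose (ι _ ≫ t.1 ≫ π _), ?_, ?_⟩
    · intro i t hmem
      show m hmem.choose (ι hmem.choose ≫ ρc i t ≫ π hmem.choose) = m i t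
      rw [indep (ρc i t) hmem.choose i hmem.choose_spec (heρ i t).symm]
      congr 1
      simp only [ρc, Category.assoc]
      rw [reassoc_of% hsplitc i, hsplitc i, Category.comp_id]
    · intro f hf
      funext t
      obtain ⟨tv, ht⟩ := t
      have hch : tv = e ht.choose ≫ tv ≫ e ht.choose := ht.choose_spec
      have hmem' : ρc ht.choose (ι ht.choose ≫ tv ≫ π ht.choose) ∈ Tdag :=
        ⟨ht.choose, (heρ _ _).symm⟩
      have hthis := hf ht.choose (ι ht.choose ≫ tv ≫ π ht.choose) hmem'
      show f ⟨tv, ht⟩ = m ht.choose (ι ht.choose ≫ tv ≫ π ht.choose)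
      rw [← hthis]
      congr 1
      exact Subtype.ext (hrec tv ht.choose hch).symm
end
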